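/- Consider the BayesGap algorithm on a K-armed linear-Gaussian bandit with K ≥ 2, horizon T > K, nonzero feature vectors x_1, …, x_K ∈ ℝ^d, noise standard deviation σ > 0, prior scale η > 0, and tolerance ε > 0. Let μ_k denote the true mean of arm k, μ* = max_k μ_k, Δ_k = |max_{i≠k} μ_i − μ_k|, H_{kε} = max(½(Δ_k + ε), ε), H_ε = Σ_k H_{kε}^{-2}, κ = Σ_k ‖x_k‖^{-2}, and β² = ((T−K)/σ² + κ/η²)/(4 H_ε). At each round t, given the arms a_1, …, a_{t−1} pulled so far, the posterior covariance is Σ̂_t = (σ^{-2} Σ_{n<t} x_{a_n} x_{a_n}ᵀ + η^{-2} I)⁻¹, the posterior standard deviation of arm k is σ̂_{kt} = √(x_kᵀ Σ̂_t x_k), and for arbitrary posterior means μ̂_{kt} ∈ ℝ the bounds are U_k(t) = μ̂_{kt} + β σ̂_{kt} and L_k(t) = μ̂_{kt} − β σ̂_{kt}; set s_k(t) = U_k(t) − L_k(t) and B_k(t) = max_{i≠k} U_i(t) − L_k(t). Suppose the arm selections follow the gap-based rule (J(t) minimizes B_·(t), j(t) ≠ J(t) maximizes U_·(t) among arms other than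 J(t), and a_t is the member of {j(t), J(t)} with the larger s), every arm is pulled at least once by time T, and the recommendation is Ω_T = J(τ) with τ = argmin_{t≤T} B_{J(t)}(t). If the bounds hold for all arms and rounds, i.e., L_k(t) ≤ μ_k ≤ U_k(t) for all k ≤ K and t ≤ T, then the simple regret satisfies R_{Ω_T} = μ* − μ_{Ω_T} ≤ ε. -/

import Mathlib

open Finset Matrix

/-- With at least two arms, the set of all arms is nonempty. -/
lemma univNe {K : ℕ} (hK : 2 ≤ K) : (univ : Finset (Fin K)).Nonempty :=
  ⟨⟨0, by omega⟩, mem_univ _⟩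

/-- With at least two arms, the set of arms other than `k` is nonempty. -/
lemma eraseNe {K : ℕ} (hK : 2 ≤ K) (k : Fin K) :
    ((univ : Finset (Fin K)).erase k).Nonempty := by
  apply card_pos.mp
  rw [card_erase_of_mem (mem_univ k), card_univ, Fintype.card_fin]
  omega

/-- The maximum of `f` over arms other than `k`. -/
noncomputable def maxOther {K : ℕ} (hK : 2 ≤ K) (f : Fin K → ℝ) (k : Fin K) : ℝ :=
  ((univ : Finset (Fin K)).erase k).sup' (eraseNe hK k) f

/-- The gap index `B_k = max_{i ≠ k} U_i − L_k`. -/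
noncomputable def gapB {K : ℕ} (hK : 2 ≤ K) (U L : Fin K → ℝ) (k : Fin K) : ℝ :=
  maxOther hK U k - L k

section helpers

lemma vecMulVec_mulVec' {d : ℕ} (w v u : Fin d → ℝ) :
    vecMulVec w v *ᵥ u = (v ⬝ᵥ u) • w := by
  ext i
  simp only [vecMulVec, mulVec, dotProduct, Matrix.of_apply, Pi.smul_apply, smul_eq_mul,
    Finset.sum_mul, Finset.mul_sum]
  exact Finset.sum_congr rfl fun j _ => by ring

lemma quad_expand {d : ℕ} (c₁ c₂ : ℝ) (t : ℕ) (w : ℕ → Fin d → ℝ) (y : Fin d → ℝ) :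
    y ⬝ᵥ ((c₁ • ∑ n ∈ Finset.range t, vecMulVec (w n) (w n) + c₂ • (1 : Matrix (Fin d) (Fin d) ℝ)) *ᵥ y)
      = c₁ * ∑ n ∈ Finset.range t, (w n ⬝ᵥ y) ^ 2 + c₂ * (y ⬝ᵥ y) := by
  rw [Matrix.add_mulVec, dotProduct_add, Matrix.smul_mulVec, Matrix.smul_mulVec,
    Matrix.one_mulVec, dotProduct_smul, dotProduct_smul]
  congr 1
  · rw [smul_eq_mul]
    congr 1
    induction t with
    | zero => simp
    | succ n ih =>
        rw [Finset.sum_range_succ, Finset.sum_range_succ, Matrix.add_mulVec, dotProduct_add, ih,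
          vecMulVec_mulVec', dotProduct_smul, smul_eq_mul, sq, dotProduct_comm]

lemma dotProduct_self_pos' {d : ℕ} {x : Fin d → ℝ} (hx : x ≠ 0) : 0 < x ⬝ᵥ x := by
  rcases lt_or_eq_of_le (Finset.sum_nonneg fun i _ => mul_self_nonneg (x i)) with h | h
  · exact h
  · exact absurd (dotProduct_self_eq_zero.mp h.symm) hx

lemma key_var_bound {d : ℕ} (c₁ c₂ : ℝ) (hc₁ : 0 < c₁) (hc₂ : 0 < c₂) (t : ℕ)
    (w : ℕ → Fin d → ℝ) (x : Fin d → ℝ) (hx : x ≠ 0) (S : Finset ℕ)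
    (hS : S ⊆ Finset.range t) (hw : ∀ n ∈ S, w n = x) :
    x ⬝ᵥ ((c₁ • ∑ n ∈ Finset.range t, vecMulVec (w n) (w n) + c₂ • (1 : Matrix (Fin d) (Fin d) ℝ))⁻¹ *ᵥ x)
      ≤ (x ⬝ᵥ x) / (c₁ * S.card * (x ⬝ᵥ x) + c₂) := by
  set A : Matrix (Fin d) (Fin d) ℝ :=
    c₁ • ∑ n ∈ Finset.range t, vecMulVec (w n) (w n) + c₂ • (1 : Matrix (Fin d) (Fin d) ℝ) with hA
  have hp : 0 < x ⬝ᵥ x := dotProduct_self_pos' hx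
  have hquad : ∀ y : Fin d → ℝ,
      y ⬝ᵥ (A *ᵥ y) = c₁ * ∑ n ∈ Finset.range t, (w n ⬝ᵥ y) ^ 2 + c₂ * (y ⬝ᵥ y) :=
    fun y => quad_expand c₁ c₂ t w y
  have hdet : A.det ≠ 0 := by
    intro h0
    obtain ⟨y, hy0, hAy⟩ := (Matrix.exists_mulVec_eq_zero_iff).mpr h0
    have h1 : y ⬝ᵥ (A *ᵥ y) = 0 := by rw [hAy, dotProduct_zero]
    rw [hquad y] at h1
    have h2 : 0 < c₂ * (y ⬝ᵥ y) := mul_pos hc₂ (dotProduct_self_pos' hy0)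
    have h3 : 0 ≤ c₁ * ∑ n ∈ Finset.range t, (w n ⬝ᵥ y) ^ 2 :=
      mul_nonneg hc₁.le (Finset.sum_nonneg fun _ _ => sq_nonneg _)
    linarith
  set y : Fin d → ℝ := A⁻¹ *ᵥ x with hy
  have hAy : A *ᵥ y = x := by
    rw [hy, Matrix.mulVec_mulVec, Matrix.mul_nonsing_inv A (isUnit_iff_ne_zero.mpr hdet),
      Matrix.one_mulVec]
  set v : ℝ := x ⬝ᵥ y with hv
  have hveq : v = y ⬝ᵥ (A *ᵥ y) := by rw [hAy, dotProduct_comm]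
  have hsum : (S.card : ℝ) * v ^ 2 ≤ ∑ n ∈ Finset.range t, (w n ⬝ᵥ y) ^ 2 := by
    have : ∀ n ∈ S, (w n ⬝ᵥ y) ^ 2 = v ^ 2 := by
      intro n hn; rw [hw n hn, hv, dotProduct_comm]
    calc (S.card : ℝ) * v ^ 2 = ∑ n ∈ S, (w n ⬝ᵥ y) ^ 2 := by
          rw [Finset.sum_congr rfl this, Finset.sum_const, nsmul_eq_mul]
      _ ≤ ∑ n ∈ Finset.range t, (w n ⬝ᵥ y) ^ 2 :=
          Finset.sum_le_sum_of_subset_of_nonneg hS fun _ _ _ => sq_nonneg _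
  have hlow : c₁ * ((S.card : ℝ) * v ^ 2) + c₂ * (y ⬝ᵥ y) ≤ v := by
    have hquady := hquad y
    rw [← hveq] at hquady
    have := mul_le_mul_of_nonneg_left hsum hc₁.le
    linarith
  have hCS : v ^ 2 ≤ (x ⬝ᵥ x) * (y ⬝ᵥ y) := by
    have := sum_mul_sq_le_sq_mul_sq Finset.univ x y
    simpa [hv, dotProduct, sq] using this
  have hvnn : 0 ≤ v := by
    have h3 : 0 ≤ c₁ * ((S.card : ℝ) * v ^ 2) :=
      mul_nonneg hc₁.le (mul_nonneg (Nat.cast_nonneg _) (sq_nonneg _))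
    have h4 : 0 ≤ c₂ * (y ⬝ᵥ y) := by
      have : (0:ℝ) ≤ y ⬝ᵥ y := Finset.sum_nonneg fun i _ => mul_self_nonneg (y i)
      positivity
    linarith
  have hQ : 0 < c₁ * S.card * (x ⬝ᵥ x) + c₂ := by positivity
  rw [le_div_iff₀ hQ]
  have hkey : (c₁ * S.card * (x ⬝ᵥ x) + c₂) * v ^ 2 ≤ (x ⬝ᵥ x) * v := by
    have h5 : c₂ * v ^ 2 ≤ c₂ * ((x ⬝ᵥ x) * (y ⬝ᵥ y)) := mul_le_mul_of_nonneg_left hCS hc₂.le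
    have h6 := mul_le_mul_of_nonneg_left hlow hp.le
    nlinarith
  rcases eq_or_lt_of_le hvnn with h | h
  · nlinarith
  · nlinarith [mul_le_mul_of_nonneg_right hkey (le_of_lt h)]

lemma le_maxOther {K : ℕ} (hK : 2 ≤ K) (f : Fin K → ℝ) {i k : Fin K} (h : i ≠ k) :
    f i ≤ maxOther hK f k :=
  Finset.le_sup' f (Finset.mem_erase.mpr ⟨h, Finset.mem_univ i⟩)

lemma maxOther_le {K : ℕ} (hK : 2 ≤ K) (f : Fin K → ℝ) {k : Fin K} {c : ℝ}
    (h : ∀ i, i ≠ k → f i ≤ c) : maxOther hK f k ≤ c :=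
  Finset.sup'_le _ _ fun i hi => h i (Finset.mem_erase.mp hi).1

lemma round_bound {K : ℕ} (hK : 2 ≤ K) (U L μ : Fin K → ℝ) (J j a : Fin K)
    (hE : ∀ k, L k ≤ μ k ∧ μ k ≤ U k)
    (hJ : ∀ k, gapB hK U L J ≤ gapB hK U L k)
    (hj : j ≠ J ∧ ∀ i, i ≠ J → U i ≤ U j)
    (ha : (a = j ∨ a = J) ∧ U a - L a = max (U j - L j) (U J - L J)) :
    gapB hK U L J ≤ U a - L a ∧
      |maxOther hK μ a - μ a| + gapB hK U L J ≤ 2 * (U a - L a) := by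
  have hmoU : maxOther hK U J = U j :=
    le_antisymm (maxOther_le hK U hj.2) (le_maxOther hK U hj.1)
  have hBJ : gapB hK U L J = U j - L J := by rw [gapB, hmoU]
  have hsj : U j - L j ≤ U a - L a := ha.2 ▸ le_max_left _ _
  have hsJ : U J - L J ≤ U a - L a := ha.2 ▸ le_max_right _ _
  have part1 : gapB hK U L J ≤ U a - L a := by
    rcases le_or_gt (U j) (U J) with h | h
    · rw [hBJ]; linarith
    · have hBj : gapB hK U L j ≤ U j - L j := by
        rw [gapB]
        have : maxOther hK U j ≤ U j := by
          apply maxOther_le hK U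
          intro i hij
          rcases eq_or_ne i J with rfl | hiJ
          · exact h.le
          · exact hj.2 i hiJ
        linarith
      exact le_trans (hJ j) (le_trans hBj hsj)
  refine ⟨part1, ?_⟩
  have h12 : maxOther hK μ a - μ a + gapB hK U L J ≤ 2 * (U a - L a) ∧
      μ a - maxOther hK μ a + gapB hK U L J ≤ 2 * (U a - L a) := by
    rcases ha.1 with rfl | rfl
    · constructor
      · rcases le_or_gt (U J) (U a) with h | h
        · have hM : maxOther hK μ a ≤ U a := by
            apply maxOther_le hK μ
            intro i hia
            rcases eq_or_ne i J with rfl | hiJ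
            · exact le_trans (hE i).2 h
            · exact le_trans (hE i).2 (hj.2 i hiJ)
          have := (hE a).1
          linarith
        · have hM : maxOther hK μ a ≤ U J := by
            apply maxOther_le hK μ
            intro i hia
            rcases eq_or_ne i J with rfl | hiJ
            · exact (hE i).2
            · exact le_trans (hE i).2 (le_trans (hj.2 i hiJ) h.le)
          have := (hE a).1
          linarith [hBJ, hsJ]
      · have h1 : μ a ≤ U a := (hE a).2
        have h2 : L J ≤ μ J := (hE J).1
        have h3 : μ J ≤ maxOther hK μ a := le_maxOther hK μ (Ne.symm hj.1)
        linarith [hBJ, part1]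
    · constructor
      · have hM : maxOther hK μ a ≤ U j := by
          apply maxOther_le hK μ
          intro i hia
          exact le_trans (hE i).2 (hmoU ▸ le_maxOther hK U hia)
        have := (hE a).1
        linarith [hBJ, part1]
      · have h1 : μ a ≤ U a := (hE a).2
        have h2 : L j ≤ μ j := (hE j).1
        have h3 : μ j ≤ maxOther hK μ a := le_maxOther hK μ hj.1
        linarith [hBJ, hsj]
  rcases abs_cases (maxOther hK μ a - μ a) with ⟨he, _⟩ | ⟨he, _⟩ <;> rw [he] <;>
    [exact h12.1; linarith [h12.2]]

end helpers

/-- Theorem 1 (deterministic content of the BayesGap simple-regret bound): on a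
`K`-armed linear-Gaussian bandit with horizon `T > K`, with exploration
constant `β² = ((T−K)/σ² + κ/η²)/(4H_ε)`, posterior covariance
`Σ̂_t = (σ⁻² Σ_{n<t} x_{a_n} x_{a_n}ᵀ + η⁻² I)⁻¹`, posterior standard
deviations `σ̂_{kt} = √(x_kᵀ Σ̂_t x_k)`, and bounds `U_k(t) = μ̂_{kt} + βσ̂_{kt}`,
`L_k(t) = μ̂_{kt} − βσ̂_{kt}`: if the arm selections follow the gap-based rule,
every arm is pulled at least once, and the bounds hold for all arms and rounds,
then the recommendation `Ω_T = J(τ)` (with `τ` minimizing `B_{J(t)}(t)`) has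
simple regret at most `ε`. Rounds are indexed `0, …, T−1`; `‖x_k‖² = x_k ⬝ᵥ x_k`
is the squared Euclidean norm. -/
theorem bayesgap_simple_regret {d K T : ℕ} (hK : 2 ≤ K) (hKT : K < T)
    (x : Fin K → (Fin d → ℝ)) (hx : ∀ k, x k ≠ 0)
    (σ η ε : ℝ) (hσ : 0 < σ) (hη : 0 < η) (hε : 0 < ε)
    (μ : Fin K → ℝ) (μhat : ℕ → Fin K → ℝ)
    (a J j : ℕ → Fin K) (τ : ℕ) (hτ : τ < T) :
    let Δ : Fin K → ℝ := fun k => |maxOther hK μ k - μ k|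
    let Hke : Fin K → ℝ := fun k => max ((Δ k + ε) / 2) ε
    let He : ℝ := ∑ k, 1 / (Hke k) ^ 2
    let κ : ℝ := ∑ k, 1 / (x k ⬝ᵥ x k)
    let β : ℝ := Real.sqrt ((((T : ℝ) - K) / σ ^ 2 + κ / η ^ 2) / (4 * He))
    let Shat : ℕ → Matrix (Fin d) (Fin d) ℝ := fun t =>
      (σ ^ (-2 : ℤ) • ∑ n ∈ Finset.range t, vecMulVec (x (a n)) (x (a n)) +
        η ^ (-2 : ℤ) • (1 : Matrix (Fin d) (Fin d) ℝ))⁻¹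
    let sdev : ℕ → Fin K → ℝ := fun t k => Real.sqrt (x k ⬝ᵥ (Shat t *ᵥ x k))
    let Ub : ℕ → Fin K → ℝ := fun t k => μhat t k + β * sdev t k
    let Lb : ℕ → Fin K → ℝ := fun t k => μhat t k - β * sdev t k
    ∀ (hE : ∀ t < T, ∀ k, Lb t k ≤ μ k ∧ μ k ≤ Ub t k)
      (hJ : ∀ t < T, ∀ k,
        gapB hK (Ub t) (Lb t) (J t) ≤ gapB hK (Ub t) (Lb t) k)
      (hj : ∀ t < T, j t ≠ J t ∧ ∀ i, i ≠ J t → Ub t i ≤ Ub t (j t))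
      (ha : ∀ t < T, (a t = j t ∨ a t = J t) ∧
        Ub t (a t) - Lb t (a t) =
          max (Ub t (j t) - Lb t (j t)) (Ub t (J t) - Lb t (J t)))
      (hpull : ∀ k, ∃ t < T, a t = k)
      (hτmin : ∀ t < T,
        gapB hK (Ub τ) (Lb τ) (J τ) ≤ gapB hK (Ub t) (Lb t) (J t)),
    univ.sup' (univNe hK) μ - μ (J τ) ≤ ε := by
  intro Δ Hke He κ β Shat sdev Ub Lb
  have hΔdef : ∀ k, Δ k = |maxOther hK μ k - μ k| := fun _ => rfl
  have hHkedef : ∀ k, Hke k = max ((Δ k + ε) / 2) ε := fun _ => rfl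
  have hHedef : He = ∑ k, 1 / (Hke k) ^ 2 := rfl
  have hκdef : κ = ∑ k, 1 / (x k ⬝ᵥ x k) := rfl
  have hβdef : β = Real.sqrt ((((T : ℝ) - K) / σ ^ 2 + κ / η ^ 2) / (4 * He)) := rfl
  have hShatdef : ∀ t, Shat t =
      (σ ^ (-2 : ℤ) • ∑ n ∈ Finset.range t, vecMulVec (x (a n)) (x (a n)) +
        η ^ (-2 : ℤ) • (1 : Matrix (Fin d) (Fin d) ℝ))⁻¹ := fun _ => rfl
  have hsdevdef : ∀ t k, sdev t k = Real.sqrt (x k ⬝ᵥ (Shat t *ᵥ x k)) := fun _ _ => rfl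
  have hUbdef : ∀ t k, Ub t k = μhat t k + β * sdev t k := fun _ _ => rfl
  have hLbdef : ∀ t k, Lb t k = μhat t k - β * sdev t k := fun _ _ => rfl
  clear_value Δ Hke He κ β Shat sdev Ub Lb
  intro hE hJ hj ha hpull hτmin
  -- basic positivity
  have hp : ∀ k, 0 < x k ⬝ᵥ x k := fun k => dotProduct_self_pos' (hx k)
  have hHke : ∀ k, 0 < Hke k := fun k => by rw [hHkedef]; exact lt_of_lt_of_le hε (le_max_right _ _)
  have hHe : 0 < He := by
    rw [hHedef]
    exact Finset.sum_pos (fun k _ => div_pos one_pos (pow_pos (hHke k) 2)) (univNe hK)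
  have hκ : 0 < κ := by
    rw [hκdef]
    exact Finset.sum_pos (fun k _ => div_pos one_pos (hp k)) (univNe hK)
  have hTK : (0:ℝ) < (T:ℝ) - K := by
    have : (K:ℝ) < T := by exact_mod_cast hKT
    linarith
  have hArg : 0 < (((T : ℝ) - K) / σ ^ 2 + κ / η ^ 2) / (4 * He) :=
    div_pos (add_pos (div_pos hTK (pow_pos hσ 2)) (div_pos hκ (pow_pos hη 2)))
      (by linarith)
  have hβ : 0 < β := by rw [hβdef]; exact Real.sqrt_pos.mpr hArg
  have hβsq : β ^ 2 = (((T : ℝ) - K) / σ ^ 2 + κ / η ^ 2) / (4 * He) := by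
    rw [hβdef]; exact Real.sq_sqrt hArg.le
  have hc₁ : (0:ℝ) < σ ^ (-2 : ℤ) := zpow_pos hσ _
  have hc₂ : (0:ℝ) < η ^ (-2 : ℤ) := zpow_pos hη _
  -- Step 1: there is a time with small gap
  have hBe : ∃ t, t < T ∧ gapB hK (Ub t) (Lb t) (J t) ≤ ε := by
    by_contra hcon
    push_neg at hcon
    -- per-arm inequality
    have hk : ∀ k : Fin K,
        σ ^ (-2:ℤ) * (((((Finset.range T).filter (fun n => a n = k)).card : ℝ)) - 1)
          + η ^ (-2:ℤ) / (x k ⬝ᵥ x k) < 4 * β ^ 2 / (Hke k) ^ 2 := by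
      intro k
      set Sk : Finset ℕ := (Finset.range T).filter (fun n => a n = k) with hSk
      have hne : Sk.Nonempty := by
        obtain ⟨t, ht, hat⟩ := hpull k
        exact ⟨t, Finset.mem_filter.mpr ⟨Finset.mem_range.mpr ht, hat⟩⟩
      set tk := Sk.max' hne with htk
      have htkmem : tk ∈ Sk := Sk.max'_mem hne
      have htkT : tk < T := Finset.mem_range.mp (Finset.mem_filter.mp htkmem).1
      have hatk : a tk = k := (Finset.mem_filter.mp htkmem).2
      -- round bound
      obtain ⟨hb1, hb2⟩ := round_bound hK (Ub tk) (Lb tk) μ (J tk) (j tk) (a tk)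
        (hE tk htkT) (hJ tk htkT) (hj tk htkT) (ha tk htkT)
      have hBgt : ε < gapB hK (Ub tk) (Lb tk) (J tk) := hcon tk htkT
      have hs : Ub tk (a tk) - Lb tk (a tk) = 2 * (β * sdev tk (a tk)) := by
        rw [hUbdef, hLbdef]; ring
      -- s > Hke k
      have hsH : Hke k < Ub tk (a tk) - Lb tk (a tk) := by
        rw [← hatk, hHkedef]
        have h1 : ε < Ub tk (a tk) - Lb tk (a tk) := lt_of_lt_of_le hBgt hb1
        have h2 : (Δ (a tk) + ε) / 2 < Ub tk (a tk) - Lb tk (a tk) := by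
          rw [hΔdef]; linarith
        exact max_lt h2 h1
      -- variance bound
      set S : Finset ℕ := (Finset.range tk).filter (fun n => a n = k) with hS
      have hvb : x k ⬝ᵥ (Shat tk *ᵥ x k)
          ≤ (x k ⬝ᵥ x k) / (σ ^ (-2:ℤ) * S.card * (x k ⬝ᵥ x k) + η ^ (-2:ℤ)) := by
        rw [hShatdef]
        apply key_var_bound _ _ hc₁ hc₂ tk (fun n => x (a n)) (x k) (hx k) S
          (Finset.filter_subset _ _)
        intro n hn
        rw [(Finset.mem_filter.mp hn).2]
      -- card relation : Sk.card = S.card + 1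
      have hScard : (Sk.card : ℝ) = (S.card : ℝ) + 1 := by
        have hSe : S = Sk.erase tk := by
          ext n
          simp only [hS, hSk, Finset.mem_filter, Finset.mem_range, Finset.mem_erase]
          constructor
          · rintro ⟨hn, han⟩
            exact ⟨by omega, by omega, han⟩
          · rintro ⟨hne', hnT, han⟩
            refine ⟨lt_of_le_of_ne ?_ hne', han⟩
            exact Finset.le_max' Sk n (Finset.mem_filter.mpr ⟨Finset.mem_range.mpr hnT, han⟩)
        have hc : S.card = Sk.card - 1 := by rw [hSe, Finset.card_erase_of_mem htkmem]
        have hpos : 1 ≤ Sk.card := Finset.card_pos.mpr hne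
        rw [hc]
        push_cast [Nat.cast_sub hpos]
        ring
      -- s = 2 β sqrt v, v := quad
      set v : ℝ := x k ⬝ᵥ (Shat tk *ᵥ x k) with hv
      clear_value v
      have hsqrt : Hke k < 2 * (β * Real.sqrt v) := by
        rw [hatk] at hs hsH
        rw [hs, hsdevdef, ← hv] at hsH
        exact hsH
      have hsqpos : 0 < Real.sqrt v := by
        rcases le_or_gt (Real.sqrt v) 0 with h | h
        · have hmn : β * Real.sqrt v ≤ 0 := mul_nonpos_of_nonneg_of_nonpos hβ.le h
          linarith [hHke k]
        · exact h
      have hvpos : 0 < v := Real.sqrt_pos.mp hsqpos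
      have hvlow : (Hke k) ^ 2 / (4 * β ^ 2) < v := by
        have h1 : Hke k / (2 * β) < Real.sqrt v := by
          rw [div_lt_iff₀ (by linarith : (0:ℝ) < 2 * β)]
          linarith [hsqrt]
        have h2 : (Hke k / (2 * β)) ^ 2 < Real.sqrt v ^ 2 := by
          apply pow_lt_pow_left₀ h1 (div_nonneg (hHke k).le (by linarith))
          norm_num
        rw [Real.sq_sqrt hvpos.le] at h2
        calc (Hke k) ^ 2 / (4 * β ^ 2) = (Hke k / (2 * β)) ^ 2 := by
              rw [div_pow]; ring_nf
          _ < v := h2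
      -- combine
      have hcomb : (Hke k) ^ 2 / (4 * β ^ 2)
          < (x k ⬝ᵥ x k) / (σ ^ (-2:ℤ) * S.card * (x k ⬝ᵥ x k) + η ^ (-2:ℤ)) :=
        lt_of_lt_of_le hvlow hvb
      have hQ : 0 < σ ^ (-2:ℤ) * (S.card : ℝ) * (x k ⬝ᵥ x k) + η ^ (-2:ℤ) := by
        have h0 : 0 ≤ σ ^ (-2:ℤ) * (S.card : ℝ) * (x k ⬝ᵥ x k) :=
          mul_nonneg (mul_nonneg hc₁.le (Nat.cast_nonneg _)) (hp k).le
        linarith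
      rw [div_lt_div_iff₀ (by nlinarith [sq_nonneg β] : (0:ℝ) < 4 * β ^ 2) hQ] at hcomb
      -- target
      rw [hScard]
      have e0 : σ ^ (-2:ℤ) * ((S.card : ℝ) + 1 - 1) = σ ^ (-2:ℤ) * (S.card : ℝ) := by ring
      rw [e0]
      have e1 : σ ^ (-2:ℤ) * (S.card : ℝ) + η ^ (-2:ℤ) / (x k ⬝ᵥ x k)
          = (σ ^ (-2:ℤ) * (S.card : ℝ) * (x k ⬝ᵥ x k) + η ^ (-2:ℤ)) / (x k ⬝ᵥ x k) := by
        rw [add_div, mul_div_cancel_right₀ _ (hp k).ne']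
      rw [e1, div_lt_div_iff₀ (hp k) (pow_pos (hHke k) 2)]
      calc (σ ^ (-2:ℤ) * (S.card : ℝ) * (x k ⬝ᵥ x k) + η ^ (-2:ℤ)) * Hke k ^ 2
          = Hke k ^ 2 * (σ ^ (-2:ℤ) * (S.card : ℝ) * (x k ⬝ᵥ x k) + η ^ (-2:ℤ)) := by ring
        _ < x k ⬝ᵥ x k * (4 * β ^ 2) := hcomb
        _ = 4 * β ^ 2 * (x k ⬝ᵥ x k) := by ring
    -- sum over k
    have hsum := Finset.sum_lt_sum_of_nonempty (univNe hK) fun k _ => hk k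
    have hTsum : ∑ k : Fin K, (((Finset.range T).filter (fun n => a n = k)).card : ℝ)
        = (T : ℝ) := by
      rw [← Nat.cast_sum]
      congr 1
      rw [← Finset.card_eq_sum_card_fiberwise (fun n _ => Finset.mem_univ (a n)),
        Finset.card_range]
    have hL : ∑ k : Fin K,
        (σ ^ (-2:ℤ) * (((((Finset.range T).filter (fun n => a n = k)).card : ℝ)) - 1)
          + η ^ (-2:ℤ) / (x k ⬝ᵥ x k))
        = σ ^ (-2:ℤ) * ((T:ℝ) - K) + η ^ (-2:ℤ) * κ := by
      rw [Finset.sum_add_distrib, ← Finset.mul_sum, Finset.sum_sub_distrib, hTsum]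
      simp only [Finset.sum_const, Finset.card_univ, Fintype.card_fin, nsmul_eq_mul, mul_one]
      congr 1
      rw [hκdef, Finset.mul_sum]
      exact Finset.sum_congr rfl fun k _ => by rw [div_eq_mul_one_div]
    have hR : ∑ k : Fin K, 4 * β ^ 2 / (Hke k) ^ 2 = 4 * β ^ 2 * He := by
      rw [hHedef, Finset.mul_sum]
      exact Finset.sum_congr rfl fun k _ => by rw [div_eq_mul_one_div]
    rw [hL, hR] at hsum
    have hβHe : 4 * β ^ 2 * He = ((T : ℝ) - K) / σ ^ 2 + κ / η ^ 2 := by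
      rw [hβsq]
      field_simp
    have hzp1 : σ ^ (-2:ℤ) = 1 / σ ^ 2 := by
      rw [_root_.zpow_neg, one_div]
      norm_cast
    have hzp2 : η ^ (-2:ℤ) = 1 / η ^ 2 := by
      rw [_root_.zpow_neg, one_div]
      norm_cast
    rw [hβHe, hzp1, hzp2] at hsum
    have h1 : 1 / σ ^ 2 * ((T:ℝ) - K) = ((T:ℝ) - K) / σ ^ 2 := by ring
    have h2 : 1 / η ^ 2 * κ = κ / η ^ 2 := by ring
    rw [h1, h2] at hsum
    exact lt_irrefl _ hsum
  -- Step 2: conclude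
  obtain ⟨t, htT, hBt⟩ := hBe
  have hBτ : gapB hK (Ub τ) (Lb τ) (J τ) ≤ ε := le_trans (hτmin t htT) hBt
  obtain ⟨kstar, _, hks⟩ := Finset.exists_mem_eq_sup' (univNe hK) μ
  rw [hks]
  rcases eq_or_ne kstar (J τ) with rfl | hne
  · linarith [hε]
  · have h1 : μ kstar ≤ Ub τ kstar := (hE τ hτ kstar).2
    have h2 : Ub τ kstar ≤ maxOther hK (Ub τ) (J τ) := le_maxOther hK (Ub τ) hne
    have h3 : Lb τ (J τ) ≤ μ (J τ) := (hE τ hτ (J τ)).1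
    have h4 : gapB hK (Ub τ) (Lb τ) (J τ) = maxOther hK (Ub τ) (J τ) - Lb τ (J τ) := rfl
    linarith
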